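/- For every real λ > 0 there exists a constant C > 0 such that for every real q ≥ 10: Σ_{i=1}^∞ 2^{λ · √(i·q + 1) · log₂(i·q + 1)} · (2^{3 − q/2})^{i−1} ≤ 2^{C·q}. -/

import Mathlib

lemma aux_pow_rw (a b : ℝ) (i : ℕ) : (2:ℝ)^a * ((2:ℝ)^b)^i = (2:ℝ)^(a + b*i) := by
  rw [← Real.rpow_natCast ((2:ℝ)^b) i, ← Real.rpow_mul (by norm_num : (0:ℝ) ≤ 2),
    ← Real.rpow_add (by norm_num : (0:ℝ) < 2)]

lemma aux_key (L x : ℝ) (hL : 1 ≤ L) (hx : 1 ≤ x) :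
    L * Real.sqrt x * Real.logb 2 x ≤ x / 8 + 2^21 * L^4 := by
  have hx0 : (0:ℝ) < x := lt_of_lt_of_le one_pos hx
  have h14 : (0:ℝ) < x ^ (1/4 : ℝ) := Real.rpow_pos_of_pos hx0 _
  have hlog : Real.log x ≤ 4 * x ^ (1/4 : ℝ) := by
    have h1 : Real.log (x ^ (1/4:ℝ)) = (1/4) * Real.log x := Real.log_rpow hx0 _
    have h2 : Real.log (x ^ (1/4:ℝ)) ≤ x ^ (1/4:ℝ) - 1 := Real.log_le_sub_one_of_pos h14
    nlinarith
  have hlog2 : (1/2 : ℝ) ≤ Real.log 2 := by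
    have := Real.log_two_gt_d9; linarith
  have hlogx0 : 0 ≤ Real.log x := Real.log_nonneg hx
  have hlogb : Real.logb 2 x ≤ 8 * x ^ (1/4:ℝ) := by
    rw [Real.logb, div_le_iff₀ (by linarith)]
    nlinarith [h14.le]
  have hsqrt : Real.sqrt x = x ^ (1/2:ℝ) := Real.sqrt_eq_rpow x
  have hlb0 : 0 ≤ Real.logb 2 x := Real.logb_nonneg one_lt_two hx
  have h12 : (0:ℝ) < x ^ (1/2 : ℝ) := Real.rpow_pos_of_pos hx0 _
  have h34 : (0:ℝ) < x ^ (3/4 : ℝ) := Real.rpow_pos_of_pos hx0 _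
  have hmul : x ^ (1/2:ℝ) * x ^ (1/4:ℝ) = x ^ (3/4:ℝ) := by
    rw [← Real.rpow_add hx0]; norm_num
  have hL0 : (0:ℝ) < L := lt_of_lt_of_le one_pos hL
  have step1 : L * Real.sqrt x * Real.logb 2 x ≤ 8 * L * x ^ (3/4:ℝ) := by
    rw [hsqrt]
    calc L * x ^ (1/2:ℝ) * Real.logb 2 x ≤ L * x ^ (1/2:ℝ) * (8 * x ^ (1/4:ℝ)) := by
          apply mul_le_mul_of_nonneg_left hlogb (by positivity)
      _ = 8 * L * (x ^ (1/2:ℝ) * x ^ (1/4:ℝ)) := by ring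
      _ = 8 * L * x ^ (3/4:ℝ) := by rw [hmul]
  refine step1.trans ?_
  by_cases hA : x ≤ (64*L)^4
  · have h1 : x ^ (3/4:ℝ) ≤ ((64*L)^4 : ℝ) ^ (3/4:ℝ) :=
      Real.rpow_le_rpow hx0.le hA (by norm_num)
    have h2 : ((64*L)^4 : ℝ) ^ (3/4:ℝ) = (64*L)^3 := by
      rw [← Real.rpow_natCast (64*L) 4, ← Real.rpow_mul (by positivity)]
      norm_num
    rw [h2] at h1
    nlinarith [hx0.le, hL0.le, sq_nonneg L, sq_nonneg (L-1)]
  · push_neg at hA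
    have h64 : (0:ℝ) ≤ 64*L := by positivity
    have h1 : (64*L) ≤ x ^ (1/4:ℝ) := by
      have := Real.rpow_le_rpow (by positivity) hA.le (by norm_num : (0:ℝ) ≤ 1/4)
      rwa [← Real.rpow_natCast (64*L) 4, ← Real.rpow_mul h64, show ((4:ℕ):ℝ) * (1/4) = 1 by norm_num,
        Real.rpow_one] at this
    have h2 : x ^ (3/4:ℝ) * x ^ (1/4:ℝ) = x := by
      rw [← Real.rpow_add hx0]; norm_num
    have h3 : 64 * L * x ^ (3/4:ℝ) ≤ x := by
      calc 64 * L * x ^ (3/4:ℝ) ≤ x ^ (1/4:ℝ) * x ^ (3/4:ℝ) :=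
            mul_le_mul_of_nonneg_right h1 h34.le
        _ = x := by rw [mul_comm, h2]
    have hML : (0:ℝ) ≤ 2^21 * L^4 := by positivity
    linarith

/-- Bound on the total expected time per subsubproblem between consecutive soft walls
(Section 4): for every `λ > 0` there is a constant `C > 0` such that for all `q ≥ 10`,
`Σ_{i=1}^∞ 2^{λ·√(iq+1)·log₂(iq+1)} · (2^{3−q/2})^{i−1} ≤ 2^{Cq}` (the series being
summable; here the index is shifted so `i : ℕ` corresponds to the original index `i + 1`). -/
theorem stmt_10 (l : ℝ) (hl : 0 < l) :
    ∃ C : ℝ, 0 < C ∧ ∀ q : ℝ, 10 ≤ q →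
      Summable (fun i : ℕ =>
        (2 : ℝ) ^ (l * Real.sqrt ((i + 1 : ℝ) * q + 1) * Real.logb 2 ((i + 1 : ℝ) * q + 1)) *
          ((2 : ℝ) ^ ((3 : ℝ) - q / 2)) ^ i) ∧
      (∑' i : ℕ,
        (2 : ℝ) ^ (l * Real.sqrt ((i + 1 : ℝ) * q + 1) * Real.logb 2 ((i + 1 : ℝ) * q + 1)) *
          ((2 : ℝ) ^ ((3 : ℝ) - q / 2)) ^ i) ≤ (2 : ℝ) ^ (C * q) := by
  set L : ℝ := max l 1 with hLdef
  have hL : (1:ℝ) ≤ L := le_max_right _ _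
  have hL0 : (0:ℝ) < L := lt_of_lt_of_le one_pos hL
  have hlL : l ≤ L := le_max_left _ _
  set M : ℝ := 2^21 * L^4 with hMdef
  have hM0 : (0:ℝ) ≤ M := by positivity
  refine ⟨1 + M, by positivity, fun q hq => ?_⟩
  set B : ℝ := q/8 + 1/8 + M with hBdef
  have hr1 : (2:ℝ)^(-(3/4):ℝ) < 1 :=
    Real.rpow_lt_one_of_one_lt_of_neg one_lt_two (by norm_num)
  have hr0 : (0:ℝ) ≤ (2:ℝ)^(-(3/4):ℝ) := by positivity
  have key : ∀ i : ℕ,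
      (2 : ℝ) ^ (l * Real.sqrt ((i + 1 : ℝ) * q + 1) * Real.logb 2 ((i + 1 : ℝ) * q + 1)) *
          ((2 : ℝ) ^ ((3 : ℝ) - q / 2)) ^ i
        ≤ (2:ℝ)^B * ((2:ℝ)^(-(3/4):ℝ))^i := by
    intro i
    have hi : (0:ℝ) ≤ (i:ℝ) := Nat.cast_nonneg i
    have hx1 : (1:ℝ) ≤ (i + 1 : ℝ) * q + 1 := by nlinarith
    have hkey := aux_key L ((i + 1 : ℝ) * q + 1) hL hx1
    have hlb : 0 ≤ Real.logb 2 ((i + 1 : ℝ) * q + 1) := Real.logb_nonneg one_lt_two hx1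
    have hs : 0 ≤ Real.sqrt ((i + 1 : ℝ) * q + 1) := Real.sqrt_nonneg _
    have he : l * Real.sqrt ((i + 1 : ℝ) * q + 1) * Real.logb 2 ((i + 1 : ℝ) * q + 1)
        ≤ ((i + 1 : ℝ) * q + 1)/8 + M := by nlinarith [mul_nonneg hs hlb]
    rw [aux_pow_rw, aux_pow_rw]
    apply Real.rpow_le_rpow_of_exponent_le one_le_two
    have hiq : (0:ℝ) ≤ (i:ℝ) * (3*q/8 - 15/4) :=
      mul_nonneg hi (by linarith)
    simp only [hBdef]
    nlinarith
  have hg : Summable (fun i:ℕ => (2:ℝ)^B * ((2:ℝ)^(-(3/4):ℝ))^i) :=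
    (summable_geometric_of_lt_one hr0 hr1).mul_left _
  have hf0 : ∀ i : ℕ, 0 ≤
      (2 : ℝ) ^ (l * Real.sqrt ((i + 1 : ℝ) * q + 1) * Real.logb 2 ((i + 1 : ℝ) * q + 1)) *
        ((2 : ℝ) ^ ((3 : ℝ) - q / 2)) ^ i := fun i => by positivity
  have hfsum : Summable (fun i : ℕ =>
      (2 : ℝ) ^ (l * Real.sqrt ((i + 1 : ℝ) * q + 1) * Real.logb 2 ((i + 1 : ℝ) * q + 1)) *
        ((2 : ℝ) ^ ((3 : ℝ) - q / 2)) ^ i) :=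
    Summable.of_nonneg_of_le hf0 key hg
  refine ⟨hfsum, ?_⟩
  have hts : (∑' i : ℕ,
      (2 : ℝ) ^ (l * Real.sqrt ((i + 1 : ℝ) * q + 1) * Real.logb 2 ((i + 1 : ℝ) * q + 1)) *
        ((2 : ℝ) ^ ((3 : ℝ) - q / 2)) ^ i) ≤ ∑' i : ℕ, (2:ℝ)^B * ((2:ℝ)^(-(3/4):ℝ))^i :=
    Summable.tsum_le_tsum key hfsum hg
  have hgeo : (∑' i : ℕ, (2:ℝ)^B * ((2:ℝ)^(-(3/4):ℝ))^i)
      = (2:ℝ)^B * (1 - (2:ℝ)^(-(3/4):ℝ))⁻¹ := by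
    rw [tsum_mul_left, tsum_geometric_of_lt_one hr0 hr1]
  have hr34 : (2:ℝ)^(-(3/4):ℝ) ≤ 3/4 := by
    have h4 : ((2:ℝ)^(-(3/4):ℝ))^(4:ℕ) = (2:ℝ)^(-(3:ℝ)) := by
      rw [← Real.rpow_natCast ((2:ℝ)^(-(3/4):ℝ)) 4, ← Real.rpow_mul (by norm_num : (0:ℝ) ≤ 2)]
      norm_num
    have h8 : (2:ℝ)^(-(3:ℝ)) = 1/8 := by
      rw [show (-(3:ℝ)) = -((3:ℕ):ℝ) by norm_num, Real.rpow_neg (by norm_num), Real.rpow_natCast]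
      norm_num
    apply le_of_pow_le_pow_left₀ (n := 4) (by norm_num) (by norm_num)
    rw [h4, h8]; norm_num
  have hinv : (1 - (2:ℝ)^(-(3/4):ℝ))⁻¹ ≤ 4 := by
    rw [inv_le_iff_one_le_mul₀ (by linarith)]
    linarith
  have h2B : (0:ℝ) ≤ (2:ℝ)^B := by positivity
  have hfin : (2:ℝ)^B * (1 - (2:ℝ)^(-(3/4):ℝ))⁻¹ ≤ (2:ℝ)^((1+M)*q) := by
    calc (2:ℝ)^B * (1 - (2:ℝ)^(-(3/4):ℝ))⁻¹ ≤ (2:ℝ)^B * 4 :=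
          mul_le_mul_of_nonneg_left hinv h2B
      _ = (2:ℝ)^B * (2:ℝ)^((2:ℕ):ℝ) := by rw [Real.rpow_natCast]; norm_num
      _ = (2:ℝ)^(B + 2) := by rw [← Real.rpow_add (by norm_num : (0:ℝ) < 2)]; norm_num
      _ ≤ (2:ℝ)^((1+M)*q) := by
          apply Real.rpow_le_rpow_of_exponent_le one_le_two
          have : 0 ≤ M * (q - 1) := mul_nonneg hM0 (by linarith)
          simp only [hBdef]; nlinarith
  calc _ ≤ _ := hts
    _ = _ := hgeo
    _ ≤ _ := hfin
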